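/- (Proposition 2, good camp.) Fix any y¹, y² ∈ ℝⁿ and k_g > 0. The maximum of (x¹, x²) ↦ F(x¹, x², y¹, y²) over the feasible set {(x¹, x²) ∈ ℝⁿ × ℝⁿ : x¹_i ≥ 0 and x²_i ≥ 0 for all i, and Σ_i (x¹_i + x²_i) ≤ k_g} is attained, and it is attained at some point (x¹, x²) such that x¹ has at most one nonzero coordinate, x² has at most one nonzero coordinate, and either Σ_i (x¹_i + x²_i) = k_g or x¹ = x² = 0. -/

import Mathlib

/-- The two-phase objective function `F(x¹,x²,y¹,y²)` (the sum of final opinions). -/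
noncomputable def twoPhaseF (n : ℕ) (θ c r s : Fin n → ℝ)
    (b : Matrix (Fin n) (Fin n) ℝ) (x1 x2 y1 y2 : Fin n → ℝ) : ℝ :=
  (∑ i, ∑ j, c i * b j i)
  + (∑ j, x2 j * (θ j / 2) * ((∑ i, c i * b j i) + r j))
  + (∑ j, y2 j * (θ j / 2) * ((∑ i, c i * b j i) - r j))
  + (∑ i, x1 i * (θ i / 2) * (1 + c i) *
      (s i + ∑ j, (x2 j + y2 j) * (θ j / 2) * b j i))
  - (∑ i, y1 i * (θ i / 2) * (1 - c i) *
      (s i + ∑ j, (x2 j + y2 j) * (θ j / 2) * b j i))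

/-- A vector supported on a single coordinate. -/
def sgl (n : ℕ) (i : Fin n) (t : ℝ) : Fin n → ℝ := fun k => if k = i then t else 0

lemma sgl_mul_sum (n : ℕ) (i : Fin n) (t : ℝ) (p : Fin n → ℝ) :
    ∑ k, sgl n i t k * p k = t * p i := by
  simp [sgl, ite_mul]

lemma sgl_sum (n : ℕ) (i : Fin n) (t : ℝ) : ∑ k, sgl n i t k = t := by
  simp [sgl]

lemma sgl_zero (n : ℕ) (i : Fin n) : sgl n i 0 = 0 := by
  funext k; simp [sgl]

lemma sgl_nonneg (n : ℕ) (i : Fin n) (t : ℝ) (ht : 0 ≤ t) (k : Fin n) :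
    0 ≤ sgl n i t k := by
  unfold sgl; split <;> simp [ht]

lemma sgl_supp (n : ℕ) (i : Fin n) (t : ℝ) (k : Fin n) (h : sgl n i t k ≠ 0) :
    k = i := by
  by_contra hne; exact h (by simp [sgl, hne])

/-- `F` is affine in `x1`. -/
lemma lin1 (n : ℕ) (θ c r s : Fin n → ℝ) (b : Matrix (Fin n) (Fin n) ℝ)
    (x1 x2 y1 y2 : Fin n → ℝ) :
    twoPhaseF n θ c r s b x1 x2 y1 y2 = twoPhaseF n θ c r s b 0 x2 y1 y2
      + ∑ i, x1 i * ((θ i / 2) * ((1 + c i) *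
          (s i + ∑ j, (x2 j + y2 j) * (θ j / 2) * b j i))) := by
  have h : ∑ i, x1 i * ((θ i / 2) * ((1 + c i) *
          (s i + ∑ j, (x2 j + y2 j) * (θ j / 2) * b j i)))
      = ∑ i, x1 i * (θ i / 2) * (1 + c i) *
          (s i + ∑ j, (x2 j + y2 j) * (θ j / 2) * b j i) :=
    Finset.sum_congr rfl fun i _ => by ring
  simp only [twoPhaseF, Pi.zero_apply, zero_mul, Finset.sum_const_zero, h]
  ring

lemma split (n : ℕ) (a x2 y2 S θ' : Fin n → ℝ) (b : Matrix (Fin n) (Fin n) ℝ) :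
    ∑ i, a i * (S i + ∑ j, (x2 j + y2 j) * θ' j * b j i)
    = (∑ i, a i * (S i + ∑ j, (0 + y2 j) * θ' j * b j i))
      + ∑ j, x2 j * ∑ i, a i * (θ' j * b j i) := by
  have h1 : ∀ i, ∑ j, (x2 j + y2 j) * θ' j * b j i
      = (∑ j, (0 + y2 j) * θ' j * b j i) + ∑ j, x2 j * (θ' j * b j i) := by
    intro i; rw [← Finset.sum_add_distrib]
    exact Finset.sum_congr rfl fun j _ => by ring
  calc ∑ i, a i * (S i + ∑ j, (x2 j + y2 j) * θ' j * b j i)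
      = ∑ i, (a i * (S i + ∑ j, (0 + y2 j) * θ' j * b j i)
            + ∑ j, x2 j * (a i * (θ' j * b j i))) := by
        refine Finset.sum_congr rfl fun i _ => ?_
        rw [h1 i]
        have h2 : ∑ j, x2 j * (a i * (θ' j * b j i))
            = a i * ∑ j, x2 j * (θ' j * b j i) := by
          rw [Finset.mul_sum]; exact Finset.sum_congr rfl fun j _ => by ring
        rw [h2]; ring
    _ = (∑ i, a i * (S i + ∑ j, (0 + y2 j) * θ' j * b j i))
          + ∑ i, ∑ j, x2 j * (a i * (θ' j * b j i)) := Finset.sum_add_distrib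
    _ = (∑ i, a i * (S i + ∑ j, (0 + y2 j) * θ' j * b j i))
          + ∑ j, ∑ i, x2 j * (a i * (θ' j * b j i)) := by rw [Finset.sum_comm]
    _ = (∑ i, a i * (S i + ∑ j, (0 + y2 j) * θ' j * b j i))
          + ∑ j, x2 j * ∑ i, a i * (θ' j * b j i) := by
        congr 1
        exact Finset.sum_congr rfl fun j _ => by rw [Finset.mul_sum]

/-- `F` is affine in `x2`. -/
lemma lin2 (n : ℕ) (θ c r s : Fin n → ℝ) (b : Matrix (Fin n) (Fin n) ℝ)
    (x1 x2 y1 y2 : Fin n → ℝ) :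
    twoPhaseF n θ c r s b x1 x2 y1 y2 = twoPhaseF n θ c r s b x1 0 y1 y2
      + ∑ j, x2 j * ((θ j / 2) * ((∑ i, c i * b j i) + r j)
          + ((∑ i, x1 i * (θ i / 2) * (1 + c i) * ((θ j / 2) * b j i))
           - (∑ i, y1 i * (θ i / 2) * (1 - c i) * ((θ j / 2) * b j i)))) := by
  have h4 := split n (fun i => x1 i * (θ i / 2) * (1 + c i)) x2 y2 s (fun j => θ j / 2) b
  have h5 := split n (fun i => y1 i * (θ i / 2) * (1 - c i)) x2 y2 s (fun j => θ j / 2) b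
  have hfin : ∑ j, x2 j * ((θ j / 2) * ((∑ i, c i * b j i) + r j)
          + ((∑ i, x1 i * (θ i / 2) * (1 + c i) * ((θ j / 2) * b j i))
           - (∑ i, y1 i * (θ i / 2) * (1 - c i) * ((θ j / 2) * b j i))))
      = (∑ j, x2 j * (θ j / 2) * ((∑ i, c i * b j i) + r j))
        + ((∑ j, x2 j * ∑ i, x1 i * (θ i / 2) * (1 + c i) * ((θ j / 2) * b j i))
         - (∑ j, x2 j * ∑ i, y1 i * (θ i / 2) * (1 - c i) * ((θ j / 2) * b j i))) := by
    rw [← Finset.sum_sub_distrib, ← Finset.sum_add_distrib]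
    exact Finset.sum_congr rfl fun j _ => by ring
  simp only [twoPhaseF, Pi.zero_apply, h4, h5, hfin, zero_mul, Finset.sum_const_zero]
  ring

/-- Pushing an affine function to a vertex. -/
lemma push (n : ℕ) (hn : 0 < n) (f : (Fin n → ℝ) → ℝ) (a : ℝ) (p : Fin n → ℝ)
    (hf : ∀ z, f z = a + ∑ i, z i * p i)
    (x : Fin n → ℝ) (hx : ∀ i, 0 ≤ x i) (T : ℝ) (hT : ∑ i, x i ≤ T) :
    ∃ i0, f x ≤ max (f 0) (f (sgl n i0 T)) := by
  obtain ⟨i0, -, hi0⟩ := Finset.exists_max_image Finset.univ p ⟨⟨0, hn⟩, Finset.mem_univ _⟩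
  refine ⟨i0, ?_⟩
  have hf0 : f 0 = a := by simp [hf]
  have hfs : f (sgl n i0 T) = a + T * p i0 := by rw [hf, sgl_mul_sum]
  have hsx : 0 ≤ ∑ i, x i := Finset.sum_nonneg fun i _ => hx i
  have hb : ∑ i, x i * p i ≤ (∑ i, x i) * p i0 := by
    rw [Finset.sum_mul]
    exact Finset.sum_le_sum fun i _ => mul_le_mul_of_nonneg_left (hi0 i (Finset.mem_univ i)) (hx i)
  rcases le_or_gt (p i0) 0 with h | h
  · refine le_trans ?_ (le_max_left _ _)
    rw [hf x, hf0]
    nlinarith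
  · refine le_trans ?_ (le_max_right _ _)
    rw [hf x, hfs]
    nlinarith


/-- Proposition 2, good camp: for any fixed strategy `(y¹, y²)` of the
bad camp, the maximum of `(x¹,x²) ↦ F(x¹,x²,y¹,y²)` over the good camp's feasible set
is attained at a point where each phase's investment vector has at most one nonzero
coordinate, and either the entire budget is exhausted or nothing is invested. -/
theorem prop2_good_camp (n : ℕ) (hn : 0 < n)
    (W : Matrix (Fin n) (Fin n) ℝ)
    (hW : ∀ i, ∑ j, |W i j| < 1)
    (w0 θ z0 : Fin n → ℝ)
    (Δ : Matrix (Fin n) (Fin n) ℝ) (hΔ : Δ = (1 - W)⁻¹)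
    (r : Fin n → ℝ) (hr : ∀ i, r i = ∑ j, Δ j i)
    (c : Fin n → ℝ) (hc : ∀ i, c i = w0 i * z0 i)
    (b : Matrix (Fin n) (Fin n) ℝ) (hb : ∀ j i, b j i = r j * w0 j * Δ j i)
    (s : Fin n → ℝ) (hs : ∀ i, s i = ∑ j, b j i)
    (y1 y2 : Fin n → ℝ)
    (kg : ℝ) (hkg : 0 < kg) :
    ∃ x1 x2 : Fin n → ℝ,
      (∀ i, 0 ≤ x1 i) ∧ (∀ i, 0 ≤ x2 i) ∧ (∑ i, (x1 i + x2 i)) ≤ kg ∧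
      (∀ x1' x2' : Fin n → ℝ,
        (∀ i, 0 ≤ x1' i) → (∀ i, 0 ≤ x2' i) → (∑ i, (x1' i + x2' i)) ≤ kg →
        twoPhaseF n θ c r s b x1' x2' y1 y2 ≤ twoPhaseF n θ c r s b x1 x2 y1 y2) ∧
      (∀ i j, x1 i ≠ 0 → x1 j ≠ 0 → i = j) ∧
      (∀ i j, x2 i ≠ 0 → x2 j ≠ 0 → i = j) ∧
      ((∑ i, (x1 i + x2 i)) = kg ∨ (x1 = 0 ∧ x2 = 0)) := by
  classical
  set F := fun x1 x2 : Fin n → ℝ => twoPhaseF n θ c r s b x1 x2 y1 y2 with hF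
  -- the candidate set
  set S : Set ((Fin n → ℝ) × (Fin n → ℝ)) :=
    {((0 : Fin n → ℝ), (0 : Fin n → ℝ))} ∪
      ⋃ (i : Fin n), ⋃ (j : Fin n),
        (fun t : ℝ => (sgl n i t, sgl n j (kg - t))) '' Set.Icc 0 kg with hS
  have hmemS : ∀ (i j : Fin n) (t : ℝ), t ∈ Set.Icc (0:ℝ) kg →
      (sgl n i t, sgl n j (kg - t)) ∈ S := fun i j t ht =>
    Set.mem_union_right _ (Set.mem_iUnion.mpr ⟨i, Set.mem_iUnion.mpr ⟨j, ⟨t, ht, rfl⟩⟩⟩)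
  have hpath : ∀ i j : Fin n,
      Continuous (fun t : ℝ => (sgl n i t, sgl n j (kg - t))) := by
    intro i j
    refine Continuous.prodMk ?_ ?_
    · refine continuous_pi fun k => ?_
      by_cases h : k = i
      · simpa [sgl, h] using continuous_id'
      · simpa [sgl, h] using continuous_const
    · refine continuous_pi fun k => ?_
      by_cases h : k = j
      · simpa [sgl, h] using (by fun_prop : Continuous fun a : ℝ => kg - a)
      · simpa [sgl, h] using continuous_const
  have hScomp : IsCompact S := by
    refine IsCompact.union isCompact_singleton ?_
    exact isCompact_iUnion fun i => isCompact_iUnion fun j =>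
      isCompact_Icc.image (hpath i j)
  have hSne : S.Nonempty := ⟨((0 : Fin n → ℝ), (0 : Fin n → ℝ)), Or.inl rfl⟩
  have hcont : Continuous fun pr : (Fin n → ℝ) × (Fin n → ℝ) => F pr.1 pr.2 := by
    rw [hF]; unfold twoPhaseF; fun_prop
  obtain ⟨⟨X1, X2⟩, hmem, hmax⟩ := hScomp.exists_isMaxOn hSne hcont.continuousOn
  -- the key domination lemma
  have hkey : ∀ x1' x2' : Fin n → ℝ,
      (∀ i, 0 ≤ x1' i) → (∀ i, 0 ≤ x2' i) → (∑ i, (x1' i + x2' i)) ≤ kg →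
      ∃ z ∈ S, F x1' x2' ≤ F z.1 z.2 := by
    intro x1' x2' h1 h2 hb'
    have hsum : (∑ i, x1' i) + (∑ i, x2' i) ≤ kg := by
      rw [← Finset.sum_add_distrib]; exact hb'
    have hx1n : 0 ≤ ∑ i, x1' i := Finset.sum_nonneg fun i _ => h1 i
    have hx2n : 0 ≤ ∑ i, x2' i := Finset.sum_nonneg fun i _ => h2 i
    set T := kg - ∑ i, x2' i with hT
    have hT0 : 0 ≤ T := by simp only [hT]; linarith
    have hTkg : T ≤ kg := by simp only [hT]; linarith
    have hTa : ∑ i, x1' i ≤ T := by simp only [hT]; linarith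
    obtain ⟨i0, hA⟩ := push n hn (fun z => F z x2') (F 0 x2')
      (fun i => (θ i / 2) * ((1 + c i) * (s i + ∑ j, (x2' j + y2 j) * (θ j / 2) * b j i)))
      (fun z => lin1 n θ c r s b z x2' y1 y2) x1' h1 T hTa
    rcases max_cases (F 0 x2') (F (sgl n i0 T) x2') with ⟨he, -⟩ | ⟨he, -⟩ <;>
      rw [he] at hA
    · -- pushed x1 to 0
      obtain ⟨j0, hB⟩ := push n hn (fun z => F 0 z) (F 0 0)
        (fun j => (θ j / 2) * ((∑ i, c i * b j i) + r j)
          + ((∑ i, (0:Fin n → ℝ) i * (θ i / 2) * (1 + c i) * ((θ j / 2) * b j i))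
           - (∑ i, y1 i * (θ i / 2) * (1 - c i) * ((θ j / 2) * b j i))))
        (fun z => lin2 n θ c r s b 0 z y1 y2) x2' h2 kg (by linarith)
      rcases max_cases (F 0 0) (F 0 (sgl n j0 kg)) with ⟨he2, -⟩ | ⟨he2, -⟩ <;>
        rw [he2] at hB
      · exact ⟨((0 : Fin n → ℝ), (0 : Fin n → ℝ)), Or.inl rfl, hA.trans hB⟩
      · refine ⟨(sgl n ⟨0, hn⟩ 0, sgl n j0 (kg - 0)),
          hmemS ⟨0, hn⟩ j0 0 ⟨le_refl 0, hkg.le⟩, ?_⟩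
        simp only [sgl_zero, sub_zero]
        exact hA.trans hB
    · -- x1 at sgl i0 T
      obtain ⟨j0, hB⟩ := push n hn (fun z => F (sgl n i0 T) z) (F (sgl n i0 T) 0)
        (fun j => (θ j / 2) * ((∑ i, c i * b j i) + r j)
          + ((∑ i, sgl n i0 T i * (θ i / 2) * (1 + c i) * ((θ j / 2) * b j i))
           - (∑ i, y1 i * (θ i / 2) * (1 - c i) * ((θ j / 2) * b j i))))
        (fun z => lin2 n θ c r s b (sgl n i0 T) z y1 y2) x2' h2 (kg - T)
        (by simp only [hT]; linarith)
      rcases max_cases (F (sgl n i0 T) 0) (F (sgl n i0 T) (sgl n j0 (kg - T)))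
        with ⟨he2, -⟩ | ⟨he2, -⟩ <;> rw [he2] at hB
      · -- x2 pushed to 0; push x1 again with budget kg
        obtain ⟨i1, hC⟩ := push n hn (fun z => F z 0) (F 0 0)
          (fun i => (θ i / 2) * ((1 + c i) *
            (s i + ∑ j, ((0:Fin n → ℝ) j + y2 j) * (θ j / 2) * b j i)))
          (fun z => lin1 n θ c r s b z 0 y1 y2) (sgl n i0 T)
          (sgl_nonneg n i0 T hT0) kg (by rw [sgl_sum]; exact hTkg)
        rcases max_cases (F 0 0) (F (sgl n i1 kg) 0) with ⟨he3, -⟩ | ⟨he3, -⟩ <;>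
          rw [he3] at hC
        · exact ⟨((0 : Fin n → ℝ), (0 : Fin n → ℝ)), Or.inl rfl,
            hA.trans (hB.trans hC)⟩
        · refine ⟨(sgl n i1 kg, sgl n j0 (kg - kg)),
            hmemS i1 j0 kg ⟨hkg.le, le_refl kg⟩, ?_⟩
          simp only [sub_self, sgl_zero]
          exact hA.trans (hB.trans hC)
      · exact ⟨(sgl n i0 T, sgl n j0 (kg - T)), hmemS i0 j0 T ⟨hT0, hTkg⟩,
          hA.trans hB⟩
  have hdom : ∀ x1' x2' : Fin n → ℝ,
      (∀ i, 0 ≤ x1' i) → (∀ i, 0 ≤ x2' i) → (∑ i, (x1' i + x2' i)) ≤ kg →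
      F x1' x2' ≤ F X1 X2 := by
    intro x1' x2' h1 h2 h3
    obtain ⟨z, hz, hle⟩ := hkey x1' x2' h1 h2 h3
    exact hle.trans (hmax hz)
  -- structural facts about (X1, X2)
  rcases hmem with h0 | himg
  · -- (X1, X2) = (0, 0)
    have e1 : X1 = 0 := congrArg Prod.fst (Set.mem_singleton_iff.mp h0)
    have e2 : X2 = 0 := congrArg Prod.snd (Set.mem_singleton_iff.mp h0)
    subst e1; subst e2
    refine ⟨0, 0, fun i => le_refl 0, fun i => le_refl 0, by simpa using hkg.le,
      hdom, ?_, ?_, Or.inr ⟨rfl, rfl⟩⟩ <;>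
      · intro i j hi _; exact absurd rfl hi
  · simp only [Set.mem_iUnion] at himg
    obtain ⟨i, j, t, ht, heq⟩ := himg
    have e1 : sgl n i t = X1 := congrArg Prod.fst heq
    have e2 : sgl n j (kg - t) = X2 := congrArg Prod.snd heq
    subst e1; subst e2
    refine ⟨sgl n i t, sgl n j (kg - t),
      sgl_nonneg n i t ht.1, sgl_nonneg n j (kg - t) (by linarith [ht.2]),
      ?_, hdom, ?_, ?_, Or.inl ?_⟩
    · rw [Finset.sum_add_distrib, sgl_sum, sgl_sum]; linarith
    · intro a a' ha ha'; rw [sgl_supp n i t a ha, sgl_supp n i t a' ha']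
    · intro a a' ha ha'; rw [sgl_supp n j (kg - t) a ha, sgl_supp n j (kg - t) a' ha']
    · rw [Finset.sum_add_distrib, sgl_sum, sgl_sum]; ring
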